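/- Let A ∈ ℝ^{n×n}, let x ∈ ℝⁿ be a unit vector with xᵀA = λxᵀ for some λ ∈ ℝ, and let Q ∈ ℝ^{n×(n−1)} satisfy QᵀQ = I_{n−1} and QQᵀ = I_n − x xᵀ. Then for every v ∈ ℝⁿ with xᵀv = 0, exp(A) v = Q exp(QᵀAQ) Qᵀ v. -/

import Mathlib

open Matrix

section Aux

variable {n m : ℕ}

lemma vecMulVec_mul_aux (x y : Fin n → ℝ) (M : Matrix (Fin n) (Fin n) ℝ) :
    vecMulVec x y * M = vecMulVec x (y ᵥ* M) := by
  ext i j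
  simp [vecMulVec_apply, mul_apply, vecMul, dotProduct, Finset.mul_sum, mul_assoc]

lemma vecMulVec_smul_aux (x y : Fin n → ℝ) (a : ℝ) :
    vecMulVec x (a • y) = a • vecMulVec x y := by
  ext i j
  simp only [vecMulVec_apply, Matrix.smul_apply, Pi.smul_apply, smul_eq_mul]
  ring

lemma vecMul_vecMulVec_aux (x : Fin n → ℝ) (hx : x ⬝ᵥ x = 1) :
    x ᵥ* vecMulVec x x = x := by
  ext j
  have : ∑ i, x i * (x i * x j) = (∑ i, x i * x i) * x j := by
    rw [Finset.sum_mul]; exact Finset.sum_congr rfl fun i _ => (mul_assoc _ _ _).symm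
  simp [vecMul, dotProduct, vecMulVec_apply, this, show ∑ i, x i * x i = 1 from hx]

lemma vecMulVec_mulVec_aux (x : Fin n → ℝ) (v : Fin n → ℝ) (hv : x ⬝ᵥ v = 0) :
    vecMulVec x x *ᵥ v = 0 := by
  ext i
  have : ∑ j, x i * x j * v j = x i * ∑ j, x j * v j := by
    rw [Finset.mul_sum]; exact Finset.sum_congr rfl fun j _ => (mul_assoc _ _ _)
  simp [mulVec, dotProduct, vecMulVec_apply, this, show ∑ j, x j * v j = 0 from hv]

lemma vecMulVec_zero_aux (x : Fin n → ℝ) : vecMulVec x (0 : Fin n → ℝ) = 0 := by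
  ext i j
  simp [vecMulVec_apply]

end Aux

/-- Projection identity for the matrix exponential: if `x` is a unit left eigenvector
of `A` and the columns of `Q` form an orthonormal basis of `span{x}ᗮ`, then for every
`v ⊥ x` one has `exp(A) v = Q exp(Qᵀ A Q) Qᵀ v`. -/
theorem exp_projected_identity {n : ℕ}
    (A : Matrix (Fin n) (Fin n) ℝ) (x : Fin n → ℝ) (hx : x ⬝ᵥ x = 1)
    (lam : ℝ) (hxA : x ᵥ* A = lam • x)
    (Q : Matrix (Fin n) (Fin (n - 1)) ℝ)
    (hQ1 : Qᵀ * Q = 1)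
    (hQ2 : Q * Qᵀ = 1 - Matrix.vecMulVec x x)
    (v : Fin n → ℝ) (hv : x ⬝ᵥ v = 0) :
    NormedSpace.exp A *ᵥ v
      = Q *ᵥ (NormedSpace.exp (Qᵀ * A * Q) *ᵥ (Qᵀ *ᵥ v)) := by
  letI : SeminormedRing (Matrix (Fin n) (Fin n) ℝ) := Matrix.linftyOpSemiNormedRing
  letI : NormedRing (Matrix (Fin n) (Fin n) ℝ) := Matrix.linftyOpNormedRing
  letI : NormedAlgebra ℝ (Matrix (Fin n) (Fin n) ℝ) := Matrix.linftyOpNormedAlgebra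
  letI : SeminormedRing (Matrix (Fin (n-1)) (Fin (n-1)) ℝ) := Matrix.linftyOpSemiNormedRing
  letI : NormedRing (Matrix (Fin (n-1)) (Fin (n-1)) ℝ) := Matrix.linftyOpNormedRing
  letI : NormedAlgebra ℝ (Matrix (Fin (n-1)) (Fin (n-1)) ℝ) := Matrix.linftyOpNormedAlgebra
  set P : Matrix (Fin n) (Fin n) ℝ := 1 - Matrix.vecMulVec x x with hP
  set B : Matrix (Fin (n-1)) (Fin (n-1)) ℝ := Qᵀ * A * Q with hB
  -- left eigenvector for powers
  have hxAk : ∀ k : ℕ, x ᵥ* A ^ k = (lam ^ k) • x := by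
    intro k
    induction k with
    | zero => simp
    | succ k ih =>
        rw [pow_succ, ← vecMul_vecMul, ih, Matrix.smul_vecMul, hxA, smul_smul, pow_succ]
  have hxP : x ᵥ* P = 0 := by
    rw [hP, Matrix.vecMul_sub, Matrix.vecMul_one, vecMul_vecMulVec_aux x hx, sub_self]
  -- P * A^k * P = A^k * P
  have hPAP : ∀ k : ℕ, P * A ^ k * P = A ^ k * P := by
    intro k
    have h1 : P * A ^ k = A ^ k - (lam ^ k) • vecMulVec x x := by
      rw [hP, Matrix.sub_mul, Matrix.one_mul, vecMulVec_mul_aux, hxAk k, vecMulVec_smul_aux]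
    rw [h1, Matrix.sub_mul, Matrix.smul_mul, vecMulVec_mul_aux, hxP, vecMulVec_zero_aux,
      smul_zero, sub_zero]
  -- main power identity
  have hpow : ∀ k : ℕ, Q * B ^ k * Qᵀ = A ^ k * P := by
    intro k
    induction k with
    | zero => simp [hQ2, hP]
    | succ k ih =>
        calc Q * B ^ (k + 1) * Qᵀ = (Q * Qᵀ) * A * (Q * B ^ k * Qᵀ) := by
              rw [pow_succ', hB]
              simp only [Matrix.mul_assoc]
          _ = P * A * (A ^ k * P) := by rw [ih, hQ2, hP]
          _ = P * A ^ (k + 1) * P := by rw [pow_succ']; simp only [Matrix.mul_assoc]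
          _ = A ^ (k + 1) * P := hPAP (k + 1)
  have hPv : P *ᵥ v = v := by
    rw [hP, Matrix.sub_mulVec, Matrix.one_mulVec, vecMulVec_mulVec_aux x v hv, sub_zero]
  -- turn both sides into tsums
  have hsumA : Summable fun k : ℕ => (Nat.factorial k : ℝ)⁻¹ • A ^ k :=
    NormedSpace.expSeries_summable' (𝕂 := ℝ) A
  have hsumB : Summable fun k : ℕ => (Nat.factorial k : ℝ)⁻¹ • B ^ k :=
    NormedSpace.expSeries_summable' (𝕂 := ℝ) B
  let f : Matrix (Fin n) (Fin n) ℝ →ₗ[ℝ] (Fin n → ℝ) :=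
    { toFun := fun M => M *ᵥ v
      map_add' := fun M N => Matrix.add_mulVec M N v
      map_smul' := fun a M => Matrix.smul_mulVec a M v }
  let g : Matrix (Fin (n-1)) (Fin (n-1)) ℝ →ₗ[ℝ] (Fin n → ℝ) :=
    { toFun := fun M => Q *ᵥ (M *ᵥ (Qᵀ *ᵥ v))
      map_add' := fun M N => by
        show Q *ᵥ ((M + N) *ᵥ (Qᵀ *ᵥ v)) = Q *ᵥ (M *ᵥ (Qᵀ *ᵥ v)) + Q *ᵥ (N *ᵥ (Qᵀ *ᵥ v))
        rw [Matrix.add_mulVec, Matrix.mulVec_add]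
      map_smul' := fun a M => by
        show Q *ᵥ ((a • M) *ᵥ (Qᵀ *ᵥ v)) = a • (Q *ᵥ (M *ᵥ (Qᵀ *ᵥ v)))
        rw [Matrix.smul_mulVec, Matrix.mulVec_smul] }
  have hf : Continuous f := f.continuous_of_finiteDimensional
  have hg : Continuous g := g.continuous_of_finiteDimensional
  have hL : NormedSpace.exp A *ᵥ v = ∑' k : ℕ, (Nat.factorial k : ℝ)⁻¹ • (A ^ k *ᵥ v) := by
    have := (⟨f, hf⟩ : Matrix (Fin n) (Fin n) ℝ →L[ℝ] (Fin n → ℝ)).map_tsum hsumA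
    simpa [f, Matrix.smul_mulVec, NormedSpace.exp_eq_tsum (𝕂 := ℝ)] using this
  have hR : Q *ᵥ (NormedSpace.exp B *ᵥ (Qᵀ *ᵥ v))
      = ∑' k : ℕ, (Nat.factorial k : ℝ)⁻¹ • (Q *ᵥ (B ^ k *ᵥ (Qᵀ *ᵥ v))) := by
    have := (⟨g, hg⟩ : Matrix (Fin (n-1)) (Fin (n-1)) ℝ →L[ℝ] (Fin n → ℝ)).map_tsum hsumB
    simpa [g, Matrix.smul_mulVec, Matrix.mulVec_smul, NormedSpace.exp_eq_tsum (𝕂 := ℝ)] using this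
  rw [hL, hR]
  refine tsum_congr fun k => ?_
  congr 1
  have : Q *ᵥ (B ^ k *ᵥ (Qᵀ *ᵥ v)) = (Q * B ^ k * Qᵀ) *ᵥ v := by
    rw [← Matrix.mulVec_mulVec, ← Matrix.mulVec_mulVec]
  rw [this, hpow k, ← Matrix.mulVec_mulVec, hPv]
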